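/- Let H be a real Hilbert space, T : H → H nonexpansive, (β_n), (λ_n) ⊂ (0,1], x₀ ∈ H, and let (x_n) be generated by the (T-KM) iteration. Then for every x ∈ H and every n ∈ ℕ: ‖x_{n+1} − x‖² ≤ β_n ‖x_n − x‖² + (1 − β_n)(2β_n ⟪x, x − x_n⟫ + (1 − β_n)‖x‖²) + ‖T(x) − x‖ (2‖β_n x_n − x‖ + ‖T(x) − x‖). -/

import Mathlib

/-- key inequality for the squared distances of the T-KM iterates
to an arbitrary point. -/
theorem tkm_squared_distance_inequality
    {H : Type*} [NormedAddCommGroup H] [InnerProductSpace ℝ H] [CompleteSpace H]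
    (T : H → H) (hT : ∀ a b : H, ‖T a - T b‖ ≤ ‖a - b‖)
    (β lam : ℕ → ℝ)
    (hβ : ∀ n, β n ∈ Set.Ioc (0 : ℝ) 1)
    (hlam : ∀ n, lam n ∈ Set.Ioc (0 : ℝ) 1)
    (x : ℕ → H)
    (hx : ∀ n, x (n + 1) = β n • x n + lam n • (T (β n • x n) - β n • x n)) :
    ∀ (u : H) (n : ℕ),
      ‖x (n + 1) - u‖ ^ 2 ≤
        β n * ‖x n - u‖ ^ 2
          + (1 - β n) * (2 * β n * (inner ℝ u (u - x n) : ℝ) + (1 - β n) * ‖u‖ ^ 2)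
          + ‖T u - u‖ * (2 * ‖β n • x n - u‖ + ‖T u - u‖) := by
  intro u n
  obtain ⟨hβ0, hβ1⟩ := hβ n
  obtain ⟨hl0, hl1⟩ := hlam n
  set y : H := β n • x n with hy
  -- step 1: ‖x (n+1) - u‖ ≤ ‖y - u‖ + ‖T u - u‖
  have h1 : ‖x (n + 1) - u‖ ≤ ‖y - u‖ + ‖T u - u‖ := by
    have hdecomp : x (n + 1) - u = (1 - lam n) • (y - u) + lam n • (T y - u) := by
      rw [hx n]; module
    rw [hdecomp]
    have hTy : ‖T y - u‖ ≤ ‖y - u‖ + ‖T u - u‖ :=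
      (norm_sub_le_norm_sub_add_norm_sub _ (T u) _).trans (by gcongr; exact hT y u)
    calc ‖(1 - lam n) • (y - u) + lam n • (T y - u)‖
        ≤ ‖(1 - lam n) • (y - u)‖ + ‖lam n • (T y - u)‖ := norm_add_le _ _
      _ = (1 - lam n) * ‖y - u‖ + lam n * ‖T y - u‖ := by
          rw [norm_smul, norm_smul, Real.norm_eq_abs, Real.norm_eq_abs,
            abs_of_nonneg (by linarith), abs_of_nonneg (le_of_lt hl0)]
      _ ≤ (1 - lam n) * ‖y - u‖ + lam n * (‖y - u‖ + ‖T u - u‖) := by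
          gcongr
      _ = ‖y - u‖ + lam n * ‖T u - u‖ := by ring
      _ ≤ ‖y - u‖ + ‖T u - u‖ := by nlinarith [norm_nonneg (T u - u)]
  have h2 : ‖x (n + 1) - u‖ ^ 2 ≤ (‖y - u‖ + ‖T u - u‖) ^ 2 := by
    have := norm_nonneg (x (n + 1) - u)
    nlinarith
  -- step 2: expand ‖y - u‖²
  have h3 : ‖y - u‖ ^ 2 = (β n) ^ 2 * ‖x n - u‖ ^ 2
      + (1 - β n) * (2 * β n * (inner ℝ u (u - x n) : ℝ) + (1 - β n) * ‖u‖ ^ 2) := by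
    have hdec : y - u = β n • (x n - u) - (1 - β n) • u := by rw [hy]; module
    have e1 : ‖y - u‖ ^ 2 = (inner ℝ (y - u) (y - u) : ℝ) :=
      (real_inner_self_eq_norm_sq _).symm
    have e2 : ‖x n - u‖ ^ 2 = (inner ℝ (x n - u) (x n - u) : ℝ) :=
      (real_inner_self_eq_norm_sq _).symm
    have e3 : ‖u‖ ^ 2 = (inner ℝ u u : ℝ) := (real_inner_self_eq_norm_sq _).symm
    rw [e1, e2, e3, hdec]
    simp only [inner_sub_left, inner_sub_right, real_inner_smul_left,
      real_inner_smul_right]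
    have hc1 : (inner ℝ (x n) u : ℝ) = inner ℝ u (x n) := real_inner_comm _ _
    ring_nf
    nlinarith [real_inner_comm u (x n), real_inner_comm (x n) u]
  have h4 : (β n) ^ 2 * ‖x n - u‖ ^ 2 ≤ β n * ‖x n - u‖ ^ 2 := by
    nlinarith [mul_nonneg (mul_nonneg hβ0.le (by linarith : (0:ℝ) ≤ 1 - β n)) (sq_nonneg ‖x n - u‖)]
  nlinarith [h2, h3, h4]
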